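/- Let V ∈ GL⁺(H) be a positive invertible operator on a Hilbert space H and F : Ω → H a V-controlled integral frame with bounds A, B such that the controlled frame operator satisfies S_{VF} = V S_F where S_F is defined weakly by ⟨S_F f, f⟩ = ∫_Ω |⟨f,F(ς)⟩|² dμ(ς). Then F is a continuous frame with bounds A‖V^{1/2}‖^{-2} and B‖V^{-1/2}‖². -/

import Mathlib

open MeasureTheory

local notation "⟪" x ", " y "⟫" => @inner ℂ _ _ x y

theorem continuous_frame_of_controlled_frame
    {H Ω : Type*} [NormedAddCommGroup H] [InnerProductSpace ℂ H]
    [FiniteDimensional ℂ H] [MeasurableSpace Ω] (μ : Measure Ω)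
    (F : Ω → H) (V S W Winv : H →L[ℂ] H) (A B : ℝ) (hA : 0 < A) (hAB : A ≤ B)
    -- V is positive, self-adjoint and invertible
    (hVsa : IsSelfAdjoint V) (hVpos : ∀ f : H, 0 ≤ (⟪V f, f⟫).re) (hVu : IsUnit V)
    -- W is the positive square root V^{1/2} of V, Winv = V^{-1/2} its inverse
    (hWsa : IsSelfAdjoint W) (hWpos : ∀ f : H, 0 ≤ (⟪W f, f⟫).re)
    (hWsq : W ∘L W = V) (hWinv : W ∘L Winv = 1 ∧ Winv ∘L W = 1)
    -- S is the frame operator of F, defined weakly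
    (hweak : ∀ f g : H, ⟪S f, g⟫ = ∫ ς, ⟪f, F ς⟫ * ⟪F ς, g⟫ ∂μ)
    -- F is a V-controlled integral frame with bounds A, B and S_{VF} = V ∘L S
    (hctrl : ∀ f : H, (⟪(V ∘L S) f, f⟫ = ∫ ς, ⟪f, F ς⟫ * ⟪V (F ς), f⟫ ∂μ) ∧
      A * ‖f‖ ^ 2 ≤ (⟪(V ∘L S) f, f⟫).re ∧ (⟪(V ∘L S) f, f⟫).re ≤ B * ‖f‖ ^ 2) :
    ∀ f : H,
      A * ‖W‖⁻¹ ^ 2 * ‖f‖ ^ 2 ≤ ∫ ς, ‖⟪f, F ς⟫‖ ^ 2 ∂μ ∧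
      ∫ ς, ‖⟪f, F ς⟫‖ ^ 2 ∂μ ≤ B * ‖Winv‖ ^ 2 * ‖f‖ ^ 2 := by
  -- a helper: z * conj z = ‖z‖² in ℂ
  have hmc : ∀ z : ℂ, z * (starRingEnd ℂ) z = ((‖z‖ ^ 2 : ℝ) : ℂ) := by
    intro z
    rw [Complex.mul_conj, Complex.normSq_eq_norm_sq]
  -- W is symmetric
  have hW : ∀ x y : H, ⟪W x, y⟫ = ⟪x, W y⟫ := by
    intro x y
    conv_lhs => rw [← ContinuousLinearMap.isSelfAdjoint_iff'.mp hWsa]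
    exact ContinuousLinearMap.adjoint_inner_left W y x
  -- key: the quadratic form of S is the integral in the goal
  have key : ∀ f : H, ⟪S f, f⟫ = ((∫ ς, ‖⟪f, F ς⟫‖ ^ 2 ∂μ : ℝ) : ℂ) := by
    intro f
    rw [hweak f f]
    have h : ∀ ς, ⟪f, F ς⟫ * ⟪F ς, f⟫ = ((‖⟪f, F ς⟫‖ ^ 2 : ℝ) : ℂ) := by
      intro ς
      rw [← inner_conj_symm (F ς) f, hmc]
    rw [integral_congr_ae (Filter.Eventually.of_forall h)]
    exact integral_ofReal
  -- S is symmetric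
  have hS : LinearMap.IsSymmetric (↑S : H →ₗ[ℂ] H) := by
    rw [LinearMap.isSymmetric_iff_inner_map_self_real]
    intro v
    rw [ContinuousLinearMap.coe_coe, key v, Complex.conj_ofReal]
  have hSpos : ∀ f : H, 0 ≤ (⟪S f, f⟫).re := by
    intro f
    rw [key f, Complex.ofReal_re]
    exact integral_nonneg fun ς => sq_nonneg _
  -- spectral decomposition of S
  obtain ⟨n, hn⟩ : ∃ n, Module.finrank ℂ H = n := ⟨_, rfl⟩
  set b := hS.eigenvectorBasis hn with hb
  set lam := hS.eigenvalues hn with hlam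
  have hb1 : ∀ i, ‖b i‖ = 1 := fun i => b.orthonormal.1 i
  have hSb : ∀ i, S (b i) = (lam i : ℂ) • b i := fun i => hS.apply_eigenvectorBasis hn i
  -- quadratic form of V equals ‖W x‖²
  have hVW : ∀ x : H, (⟪V x, x⟫).re = ‖W x‖ ^ 2 := by
    intro x
    rw [← hWsq, ContinuousLinearMap.comp_apply, hW (W x) x, inner_self_eq_norm_sq_to_K]
    norm_cast
  -- eigenvalues are nonnegative
  have hlam0 : ∀ i, 0 ≤ lam i := by
    intro i
    have := hSpos (b i)
    rw [hSb i, inner_smul_left, Complex.conj_ofReal, inner_self_eq_norm_sq_to_K,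
      hb1 i] at this
    simpa using this
  -- quadratic form of V ∘L S at eigenvectors
  have hVSb : ∀ i, (⟪(V ∘L S) (b i), b i⟫).re = lam i * ‖W (b i)‖ ^ 2 := by
    intro i
    rw [ContinuousLinearMap.comp_apply, hSb i, _root_.map_smul, inner_smul_left,
      Complex.conj_ofReal, Complex.re_ofReal_mul, hVW (b i)]
  -- norm bounds for W at unit vectors
  have hWb : ∀ i, ‖W (b i)‖ ≤ ‖W‖ := by
    intro i
    have := W.le_opNorm (b i)
    rwa [hb1 i, mul_one] at this
  have hWinvb : ∀ i, 1 ≤ ‖Winv‖ * ‖W (b i)‖ := by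
    intro i
    have h1 : Winv (W (b i)) = b i := by
      rw [← ContinuousLinearMap.comp_apply, hWinv.2, ContinuousLinearMap.one_apply]
    calc 1 = ‖b i‖ := (hb1 i).symm
      _ = ‖Winv (W (b i))‖ := by rw [h1]
      _ ≤ ‖Winv‖ * ‖W (b i)‖ := Winv.le_opNorm _
  -- per-eigenvalue bounds
  have hlo : ∀ i, A * ‖W‖⁻¹ ^ 2 ≤ lam i := by
    intro i
    have h1 := (hctrl (b i)).2.1
    rw [hVSb i, hb1 i] at h1
    norm_num at h1
    have h2 : lam i * ‖W (b i)‖ ^ 2 ≤ lam i * ‖W‖ ^ 2 := by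
      apply mul_le_mul_of_nonneg_left _ (hlam0 i)
      exact pow_le_pow_left₀ (norm_nonneg _) (hWb i) 2
    have h3 : A ≤ lam i * ‖W‖ ^ 2 := h1.trans h2
    have hWpos' : 0 < ‖W‖ := by
      by_contra hc
      push_neg at hc
      have : ‖W‖ = 0 := le_antisymm hc (norm_nonneg _)
      rw [this] at h3
      nlinarith
    rw [inv_pow, ← div_eq_mul_inv, div_le_iff₀ (by positivity)]
    linarith
  have hhi : ∀ i, lam i ≤ B * ‖Winv‖ ^ 2 := by
    intro i
    have h1 := (hctrl (b i)).2.2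
    rw [hVSb i, hb1 i] at h1
    norm_num at h1
    have h2 := hWinvb i
    have hx : 1 * 1 ≤ (‖Winv‖ * ‖W (b i)‖) * (‖Winv‖ * ‖W (b i)‖) :=
      mul_le_mul h2 h2 zero_le_one (by positivity)
    calc lam i = lam i * (1 * 1) := by ring
      _ ≤ lam i * ((‖Winv‖ * ‖W (b i)‖) * (‖Winv‖ * ‖W (b i)‖)) :=
          mul_le_mul_of_nonneg_left hx (hlam0 i)
      _ = (lam i * ‖W (b i)‖ ^ 2) * ‖Winv‖ ^ 2 := by ring
      _ ≤ B * ‖Winv‖ ^ 2 := mul_le_mul_of_nonneg_right h1 (sq_nonneg _)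
  -- expansion of quadratic forms in the eigenbasis
  have hSsum : ∀ f : H, ∫ ς, ‖⟪f, F ς⟫‖ ^ 2 ∂μ = ∑ i, lam i * ‖⟪f, b i⟫‖ ^ 2 := by
    intro f
    have e1 : ⟪S f, f⟫ = ∑ i, ⟪S f, b i⟫ * ⟪b i, f⟫ := (b.sum_inner_mul_inner (S f) f).symm
    have e2 : ∀ i, ⟪S f, b i⟫ * ⟪b i, f⟫ = ((lam i * ‖⟪f, b i⟫‖ ^ 2 : ℝ) : ℂ) := by
      intro i
      have hsym : ⟪S f, b i⟫ = ⟪f, S (b i)⟫ := hS f (b i)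
      rw [hsym, hSb i, inner_smul_right, mul_assoc, ← inner_conj_symm (b i) f, hmc]
      push_cast
      ring
    rw [key f] at e1
    simp_rw [e2, ← Complex.ofReal_sum] at e1
    exact_mod_cast e1
  have hnorm : ∀ f : H, (‖f‖ : ℝ) ^ 2 = ∑ i, ‖⟪f, b i⟫‖ ^ 2 := by
    intro f
    have e1 : ⟪f, f⟫ = ∑ i, ⟪f, b i⟫ * ⟪b i, f⟫ := (b.sum_inner_mul_inner f f).symm
    have e2 : ∀ i, ⟪f, b i⟫ * ⟪b i, f⟫ = ((‖⟪f, b i⟫‖ ^ 2 : ℝ) : ℂ) := by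
      intro i
      rw [← inner_conj_symm (b i) f, hmc]
    have e3 : ⟪f, f⟫ = ((‖f‖ ^ 2 : ℝ) : ℂ) := by
      rw [inner_self_eq_norm_sq_to_K]
      norm_cast
    rw [e3] at e1
    simp_rw [e2, ← Complex.ofReal_sum] at e1
    exact_mod_cast e1
  -- conclude
  intro f
  rw [hSsum f, hnorm f]
  constructor
  · rw [Finset.mul_sum]
    exact Finset.sum_le_sum fun i _ =>
      mul_le_mul_of_nonneg_right (hlo i) (sq_nonneg _)
  · rw [Finset.mul_sum]
    exact Finset.sum_le_sum fun i _ =>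
      mul_le_mul_of_nonneg_right (hhi i) (sq_nonneg _)
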